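/- Let G, H be strongly connected finite graphs and Φ: G → H a right-resolver. Let I, J be states of H and u₁, u₂ paths in H from I to J such that U₁ = (∂Φ)⁻¹(I)·u₁ and U₂ = (∂Φ)⁻¹(I)·u₂ are minimal images. If the symmetric difference U₁ Δ U₂ has exactly two elements J₁, J₂, then J₁ ∼_Φ J₂. -/

import Mathlib

/-- A finite directed multigraph. -/
structure FinGraph where
  V : Type
  E : Type
  [fintV : Fintype V]
  [fintE : Fintype E]
  [decV : DecidableEq V]
  [decE : DecidableEq E]
  src : E → V
  tgt : E → V

attribute [instance] FinGraph.fintV FinGraph.fintE FinGraph.decV FinGraph.decE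

/-- A graph homomorphism. -/
structure GHom (G H : FinGraph) where
  eMap : G.E → H.E
  vMap : G.V → H.V
  src_eq : ∀ e, H.src (eMap e) = vMap (G.src e)
  tgt_eq : ∀ e, H.tgt (eMap e) = vMap (G.tgt e)

def GHom.comp {G K H : FinGraph} (Δ : GHom K H) (Ψ : GHom G K) : GHom G H where
  eMap := Δ.eMap ∘ Ψ.eMap
  vMap := Δ.vMap ∘ Ψ.vMap
  src_eq := fun e => by
    simp only [Function.comp_apply, Δ.src_eq, Ψ.src_eq]
  tgt_eq := fun e => by
    simp only [Function.comp_apply, Δ.tgt_eq, Ψ.tgt_eq]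

/-- The restriction of a homomorphism to the outgoing edges of a state. -/
def outMap {G H : FinGraph} (Φ : GHom G H) (I : G.V) :
    {e : G.E // G.src e = I} → {f : H.E // H.src f = Φ.vMap I} :=
  fun e => ⟨Φ.eMap e.1, (Φ.src_eq e.1).trans (congrArg Φ.vMap e.2)⟩

/-- A right-resolver: a surjective homomorphism restricting to a bijection
on the outgoing edges of each state. -/
def IsRR {G H : FinGraph} (Φ : GHom G H) : Prop :=
  Function.Surjective Φ.vMap ∧ ∀ I : G.V, Function.Bijective (outMap Φ I)

/-- `IsPathFrom H I u`: the edge list `u` is a path in `H` starting at `I`. -/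
def IsPathFrom (H : FinGraph) : H.V → List H.E → Prop
  | _, [] => True
  | I, e :: u => H.src e = I ∧ IsPathFrom H (H.tgt e) u

/-- The terminal state of a path starting at `I`. -/
def pathEnd (H : FinGraph) (I : H.V) (u : List H.E) : H.V :=
  u.foldl (fun _ e => H.tgt e) I

/-- One-step transition: `I · a` is the target of the unique edge at `I`
lifting `a` (when `Φ` is right-resolving and `a` starts at the image of `I`). -/
noncomputable def step {G H : FinGraph} (Φ : GHom G H) (I : G.V) (a : H.E) : G.V :=
  if h : ∃ e : G.E, G.src e = I ∧ Φ.eMap e = a then G.tgt h.choose else I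

/-- Transition along a word: `I · u`. -/
noncomputable def transPath {G H : FinGraph} (Φ : GHom G H) (I : G.V) (u : List H.E) : G.V :=
  u.foldl (step Φ) I

/-- The stability relation of a right-resolver. -/
def Stable {G H : FinGraph} (Φ : GHom G H) (I₁ I₂ : G.V) : Prop :=
  Φ.vMap I₁ = Φ.vMap I₂ ∧
  ∀ u : List H.E, IsPathFrom H (Φ.vMap I₁) u →
    ∃ v : List H.E, IsPathFrom H (pathEnd H (Φ.vMap I₁) u) v ∧
      transPath Φ I₁ (u ++ v) = transPath Φ I₂ (u ++ v)

/-- A right-resolver is synchronizing if each fiber of its state map is a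
single stability class. -/
def Synchronizing {G H : FinGraph} (Φ : GHom G H) : Prop :=
  ∀ I₁ I₂ : G.V, Φ.vMap I₁ = Φ.vMap I₂ → Stable Φ I₁ I₂

/-- The fiber of the state map over a state of the codomain. -/
def fiber {G H : FinGraph} (Φ : GHom G H) (I : H.V) : Set G.V := {J | Φ.vMap J = I}

/-- The image `U · u` of a set of states under transition along a word. -/
noncomputable def setTrans {G H : FinGraph} (Φ : GHom G H) (U : Set G.V)
    (u : List H.E) : Set G.V :=
  (fun J => transPath Φ J u) '' U

/-- A minimal image of a right-resolver. -/
def IsMinImage {G H : FinGraph} (Φ : GHom G H) (U : Set G.V) : Prop :=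
  ∃ (I : H.V) (u : List H.E), IsPathFrom H I u ∧ U = setTrans Φ (fiber Φ I) u ∧
    ∀ v : List H.E, IsPathFrom H (pathEnd H I u) v →
      (setTrans Φ U v).ncard = U.ncard

/-- Strong connectedness: a directed path between every ordered pair of states. -/
def StronglyConnected (G : FinGraph) : Prop :=
  ∀ I J : G.V, ∃ u : List G.E, IsPathFrom G I u ∧ pathEnd G I u = J

section Aux

variable {G H : FinGraph} (Φ : GHom G H)

lemma pathEnd_append (I : H.V) (u v : List H.E) :
    pathEnd H I (u ++ v) = pathEnd H (pathEnd H I u) v :=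
  List.foldl_append

lemma transPath_append (K : G.V) (u v : List H.E) :
    transPath Φ K (u ++ v) = transPath Φ (transPath Φ K u) v :=
  List.foldl_append

lemma isPathFrom_append {I : H.V} {u v : List H.E} (hu : IsPathFrom H I u)
    (hv : IsPathFrom H (pathEnd H I u) v) : IsPathFrom H I (u ++ v) := by
  induction u generalizing I with
  | nil => exact hv
  | cons e u ih =>
    obtain ⟨h1, h2⟩ := hu
    exact ⟨h1, ih h2 hv⟩

lemma vMap_step (hΦ : IsRR Φ) {K : G.V} {a : H.E} (h : H.src a = Φ.vMap K) :
    Φ.vMap (step Φ K a) = H.tgt a := by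
  obtain ⟨e, he⟩ := (hΦ.2 K).2 ⟨a, h⟩
  have hex : ∃ e : G.E, G.src e = K ∧ Φ.eMap e = a :=
    ⟨e.1, e.2, congrArg Subtype.val he⟩
  rw [step, dif_pos hex]
  obtain ⟨hs, he'⟩ := hex.choose_spec
  calc Φ.vMap (G.tgt hex.choose) = H.tgt (Φ.eMap hex.choose) := (Φ.tgt_eq _).symm
    _ = H.tgt a := by rw [he']

lemma vMap_transPath (hΦ : IsRR Φ) {K : G.V} {u : List H.E}
    (h : IsPathFrom H (Φ.vMap K) u) :
    Φ.vMap (transPath Φ K u) = pathEnd H (Φ.vMap K) u := by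
  induction u generalizing K with
  | nil => rfl
  | cons a u ih =>
    obtain ⟨h1, h2⟩ := h
    have hs : Φ.vMap (step Φ K a) = H.tgt a := vMap_step Φ hΦ h1
    show Φ.vMap (transPath Φ (step Φ K a) u) = pathEnd H (H.tgt a) u
    rw [ih (by rw [hs]; exact h2), hs]

lemma setTrans_append (U : Set G.V) (u v : List H.E) :
    setTrans Φ U (u ++ v) = setTrans Φ (setTrans Φ U u) v := by
  simp only [setTrans, Set.image_image, transPath_append]

lemma mem_setTrans {U : Set G.V} {K : G.V} (hK : K ∈ U) (u : List H.E) :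
    transPath Φ K u ∈ setTrans Φ U u := ⟨K, hK, rfl⟩

lemma setTrans_mono {U V : Set G.V} (h : U ⊆ V) (u : List H.E) :
    setTrans Φ U u ⊆ setTrans Φ V u := Set.image_mono h

lemma setTrans_fiber_sub (hΦ : IsRR Φ) {I : H.V} {U : Set G.V} (hU : U ⊆ fiber Φ I)
    {u : List H.E} (hu : IsPathFrom H I u) :
    setTrans Φ U u ⊆ fiber Φ (pathEnd H I u) := by
  rintro _ ⟨K, hK, rfl⟩
  have hf : Φ.vMap K = I := hU hK
  show Φ.vMap (transPath Φ K u) = _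
  rw [vMap_transPath Φ hΦ (by rw [hf]; exact hu), hf]

/-- Main lemma: asymmetric version. -/
lemma main_lemma {I J : H.V} {u₁ u₂ : List H.E}
    (hΦ : IsRR Φ) (hH : StronglyConnected H)
    (hu₁ : IsPathFrom H I u₁) (hu₂ : IsPathFrom H I u₂)
    (he₁ : pathEnd H I u₁ = J) (he₂ : pathEnd H I u₂ = J)
    (hmin₁ : ∀ v : List H.E, IsPathFrom H J v →
      (setTrans Φ (setTrans Φ (fiber Φ I) u₁) v).ncard
        = (setTrans Φ (fiber Φ I) u₁).ncard)
    (hmin₂ : ∀ v : List H.E, IsPathFrom H J v →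
      (setTrans Φ (setTrans Φ (fiber Φ I) u₂) v).ncard
        = (setTrans Φ (fiber Φ I) u₂).ncard)
    (J₁ J₂ : G.V)
    (h1 : J₁ ∈ setTrans Φ (fiber Φ I) u₁) (h1' : J₁ ∉ setTrans Φ (fiber Φ I) u₂)
    (h2 : J₂ ∈ setTrans Φ (fiber Φ I) u₂) (h2' : J₂ ∉ setTrans Φ (fiber Φ I) u₁)
    (hsub : setTrans Φ (fiber Φ I) u₂ \ setTrans Φ (fiber Φ I) u₁ ⊆ {J₁, J₂}) :
    Stable Φ J₁ J₂ := by
  set U₁ := setTrans Φ (fiber Φ I) u₁ with hU₁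
  set U₂ := setTrans Φ (fiber Φ I) u₂ with hU₂
  have hfib₁ : U₁ ⊆ fiber Φ J := he₁ ▸ setTrans_fiber_sub Φ hΦ (fun _ h => h) hu₁
  have hfib₂ : U₂ ⊆ fiber Φ J := he₂ ▸ setTrans_fiber_sub Φ hΦ (fun _ h => h) hu₂
  have hJ1 : Φ.vMap J₁ = J := hfib₁ h1
  have hJ2 : Φ.vMap J₂ = J := hfib₂ h2
  -- cardinalities are equal
  have hcard : U₁.ncard = U₂.ncard := by
    have key : ∀ (A B : Set G.V) (p q : List H.E), IsPathFrom H I p → IsPathFrom H I q →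
        pathEnd H I p = J → pathEnd H I q = J →
        A = setTrans Φ (fiber Φ I) p → B = setTrans Φ (fiber Φ I) q →
        (∀ v : List H.E, IsPathFrom H J v → (setTrans Φ A v).ncard = A.ncard) →
        A.ncard ≤ B.ncard := by
      intro A B p q hp hq hep heq hA hB hminA
      obtain ⟨w, hw, hwend⟩ := hH J I
      have hAfib : A ⊆ fiber Φ J := by
        rw [hA, ← hep]; exact setTrans_fiber_sub Φ hΦ (fun _ h => h) hp
      have hpath : IsPathFrom H J (w ++ q) :=
        isPathFrom_append hw (by rw [hwend]; exact hq)
      have hsubB : setTrans Φ A (w ++ q) ⊆ B := by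
        rw [setTrans_append, hB]
        refine setTrans_mono Φ ?_ q
        have := setTrans_fiber_sub Φ hΦ hAfib hw
        rwa [hwend] at this
      calc A.ncard = (setTrans Φ A (w ++ q)).ncard := (hminA _ hpath).symm
        _ ≤ B.ncard := Set.ncard_le_ncard hsubB (Set.toFinite B)
    exact le_antisymm (key U₁ U₂ u₁ u₂ hu₁ hu₂ he₁ he₂ rfl rfl hmin₁)
      (key U₂ U₁ u₂ u₁ hu₂ hu₁ he₂ he₁ rfl rfl hmin₂)
  refine ⟨by rw [hJ1, hJ2], ?_⟩
  intro u hu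
  rw [hJ1] at hu ⊢
  obtain ⟨w, hw, hwend⟩ := hH (pathEnd H J u) I
  refine ⟨w ++ u₁, isPathFrom_append hw (by rw [hwend]; exact hu₁), ?_⟩
  set t := u ++ (w ++ u₁) with ht
  have htpath : IsPathFrom H J t :=
    isPathFrom_append hu (isPathFrom_append hw (by rw [hwend]; exact hu₁))
  -- (U₁ ∪ U₂) · t ⊆ U₁
  have hunion : setTrans Φ (U₁ ∪ U₂) t ⊆ U₁ := by
    have h1 : setTrans Φ (U₁ ∪ U₂) (u ++ w) ⊆ fiber Φ I := by
      have := setTrans_fiber_sub Φ hΦ (Set.union_subset hfib₁ hfib₂)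
        (isPathFrom_append hu hw)
      rwa [pathEnd_append, hwend] at this
    have : t = (u ++ w) ++ u₁ := by simp [ht]
    rw [this, setTrans_append]
    exact setTrans_mono Φ h1 u₁
  have hc1 : (setTrans Φ U₁ t).ncard = U₁.ncard := hmin₁ t htpath
  have hc2 : (setTrans Φ U₂ t).ncard = U₂.ncard := hmin₂ t htpath
  have hcu : (setTrans Φ (U₁ ∪ U₂) t).ncard ≤ U₁.ncard :=
    Set.ncard_le_ncard hunion (Set.toFinite _)
  have heq1 : setTrans Φ U₁ t = setTrans Φ (U₁ ∪ U₂) t :=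
    Set.eq_of_subset_of_ncard_le (setTrans_mono Φ Set.subset_union_left t)
      (le_trans hcu hc1.ge) (Set.toFinite _)
  have heq2 : setTrans Φ U₂ t = setTrans Φ (U₁ ∪ U₂) t :=
    Set.eq_of_subset_of_ncard_le (setTrans_mono Φ Set.subset_union_right t)
      (le_trans hcu (hcard ▸ hc2.ge)) (Set.toFinite _)
  -- J₁ · t ∈ U₂ · t
  have : transPath Φ J₁ t ∈ setTrans Φ U₂ t := by
    rw [heq2, ← heq1]; exact mem_setTrans Φ h1 t
  obtain ⟨K, hK, hKt⟩ := this
  have hinj : Set.InjOn (fun L => transPath Φ L t) U₁ :=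
    Set.injOn_of_ncard_image_eq hc1 (Set.toFinite _)
  replace hKt : transPath Φ K t = transPath Φ J₁ t := hKt
  by_cases hKJ : K = J₂
  · rw [← hKJ]; exact hKt.symm
  · exfalso
    by_cases hKU : K ∈ U₁
    · exact h1' (hinj hKU h1 hKt ▸ hK)
    · rcases hsub ⟨hK, hKU⟩ with h | h
      · exact h1' (h ▸ hK)
      · exact hKJ h

end Aux

/-- two minimal images obtained from the same fiber whose
symmetric difference is a pair yield a stable pair. -/
theorem min_images_symmdiff_pair_stable {G H : FinGraph} (Φ : GHom G H)
    (hΦ : IsRR Φ) (hG : StronglyConnected G) (hH : StronglyConnected H)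
    (I J : H.V) (u₁ u₂ : List H.E)
    (hu₁ : IsPathFrom H I u₁) (hu₂ : IsPathFrom H I u₂)
    (he₁ : pathEnd H I u₁ = J) (he₂ : pathEnd H I u₂ = J)
    (hmin₁ : ∀ v : List H.E, IsPathFrom H J v →
      (setTrans Φ (setTrans Φ (fiber Φ I) u₁) v).ncard
        = (setTrans Φ (fiber Φ I) u₁).ncard)
    (hmin₂ : ∀ v : List H.E, IsPathFrom H J v →
      (setTrans Φ (setTrans Φ (fiber Φ I) u₂) v).ncard
        = (setTrans Φ (fiber Φ I) u₂).ncard)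
    (J₁ J₂ : G.V) (hne : J₁ ≠ J₂)
    (hsd : symmDiff (setTrans Φ (fiber Φ I) u₁) (setTrans Φ (fiber Φ I) u₂)
      = {J₁, J₂}) :
    Stable Φ J₁ J₂ := by
  set U₁ := setTrans Φ (fiber Φ I) u₁ with hU₁
  set U₂ := setTrans Φ (fiber Φ I) u₂ with hU₂
  have hsd' : U₁ \ U₂ ∪ U₂ \ U₁ = {J₁, J₂} := by
    rw [← Set.symmDiff_def]; exact hsd
  have hm1 : J₁ ∈ U₁ \ U₂ ∪ U₂ \ U₁ := hsd' ▸ Set.mem_insert _ _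
  have hm2 : J₂ ∈ U₁ \ U₂ ∪ U₂ \ U₁ := hsd' ▸ Set.mem_insert_iff.mpr (Or.inr rfl)
  rcases hm1 with h1 | h1 <;> rcases hm2 with h2 | h2
  ·
    exfalso
    have hs2 : U₂ \ U₁ = ∅ := by
      by_contra h
      obtain ⟨K, hK⟩ := Set.nonempty_iff_ne_empty.mpr h
      have : K ∈ ({J₁, J₂} : Set G.V) := hsd' ▸ Set.mem_union_right _ hK
      rcases this with h | h
      · exact hK.2 (h ▸ h1.1)
      · exact hK.2 (h ▸ h2.1)
    have hsub : U₂ ⊆ U₁ := Set.diff_eq_empty.mp hs2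
    have hssub : U₂ ⊂ U₁ := ⟨hsub, fun h => h1.2 (h h1.1)⟩
    have hlt : U₂.ncard < U₁.ncard := Set.ncard_lt_ncard hssub (Set.toFinite _)
    -- but cards are equal
    obtain ⟨w, hw, hwend⟩ := hH J I
    have hfib₁ : U₁ ⊆ fiber Φ J := by
      rw [hU₁, ← he₁]; exact setTrans_fiber_sub Φ hΦ (fun _ h => h) hu₁
    have hpath : IsPathFrom H J (w ++ u₂) :=
      isPathFrom_append hw (by rw [hwend]; exact hu₂)
    have hsubB : setTrans Φ U₁ (w ++ u₂) ⊆ U₂ := by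
      rw [setTrans_append, hU₂]
      refine setTrans_mono Φ ?_ u₂
      have := setTrans_fiber_sub Φ hΦ hfib₁ hw
      rwa [hwend] at this
    have := hmin₁ (w ++ u₂) hpath
    have hle : U₁.ncard ≤ U₂.ncard := by
      rw [← this]; exact Set.ncard_le_ncard hsubB (Set.toFinite _)
    omega
  · exact main_lemma Φ hΦ hH hu₁ hu₂ he₁ he₂ hmin₁ hmin₂ J₁ J₂ h1.1 h1.2 h2.1 h2.2
      (fun K hK => hsd' ▸ Set.mem_union_right _ hK)
  · have := main_lemma Φ hΦ hH hu₂ hu₁ he₂ he₁ hmin₂ hmin₁ J₁ J₂ h1.1 h1.2 h2.1 h2.2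
      (fun K hK => hsd' ▸ Set.mem_union_left _ hK)
    exact this
  · -- both in U₂ \ U₁ : impossible, symmetric
    exfalso
    have hs2 : U₁ \ U₂ = ∅ := by
      by_contra h
      obtain ⟨K, hK⟩ := Set.nonempty_iff_ne_empty.mpr h
      have : K ∈ ({J₁, J₂} : Set G.V) := hsd' ▸ Set.mem_union_left _ hK
      rcases this with h | h
      · exact hK.2 (h ▸ h1.1)
      · exact hK.2 (h ▸ h2.1)
    have hsub : U₁ ⊆ U₂ := Set.diff_eq_empty.mp hs2
    have hssub : U₁ ⊂ U₂ := ⟨hsub, fun h => h1.2 (h h1.1)⟩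
    have hlt : U₁.ncard < U₂.ncard := Set.ncard_lt_ncard hssub (Set.toFinite _)
    obtain ⟨w, hw, hwend⟩ := hH J I
    have hfib₂ : U₂ ⊆ fiber Φ J := by
      rw [hU₂, ← he₂]; exact setTrans_fiber_sub Φ hΦ (fun _ h => h) hu₂
    have hpath : IsPathFrom H J (w ++ u₁) :=
      isPathFrom_append hw (by rw [hwend]; exact hu₁)
    have hsubB : setTrans Φ U₂ (w ++ u₁) ⊆ U₁ := by
      rw [setTrans_append, hU₁]
      refine setTrans_mono Φ ?_ u₁
      have := setTrans_fiber_sub Φ hΦ hfib₂ hw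
      rwa [hwend] at this
    have := hmin₂ (w ++ u₁) hpath
    have hle : U₂.ncard ≤ U₁.ncard := by
      rw [← this]; exact Set.ncard_le_ncard hsubB (Set.toFinite _)
    omega
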